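/- (Lemma 2.) Let d ≥ 1, 1 < p < ∞ with conjugate exponent q (1/p + 1/q = 1), let w ∈ ℝ^d with w ≠ 0, b ∈ ℝ, and ε > 0. Define v_{0|p} ∈ ℝ^d by (v_{0|p})_i = sgn(w_i)·(|w_i|/‖w‖_q)^{q−1}. Then the set Ω_{ε|p} of points x ∈ ℝ^d having an ε-ℓp-adversarial example equals Ω(ε v_{0|p}) ∪ Ω(−ε v_{0|p}), where Ω(v) is the set of x whose classification changes after adding v. -/

import Mathlib

open MeasureTheory ProbabilityTheory
open scoped ENNReal NNReal

/-- Euclidean inner product on `ℝ^d`. -/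
noncomputable def dotp {d : ℕ} (w x : Fin d → ℝ) : ℝ := ∑ i, w i * x i

/-- The `ℓ₂` norm on `ℝ^d`. -/
noncomputable def l2 {d : ℕ} (w : Fin d → ℝ) : ℝ := Real.sqrt (∑ i, (w i)^2)

/-- The product Gaussian measure `N(m, σ²I_d)` on `ℝ^d`. -/
noncomputable def gaussPi {d : ℕ} (m : Fin d → ℝ) (σ : ℝ) : Measure (Fin d → ℝ) :=
  Measure.pi fun i => gaussianReal (m i) ((σ^2).toNNReal)

/-- The standard normal cumulative distribution function `Φ`. -/
noncomputable def Phi (x : ℝ) : ℝ := ((gaussianReal 0 1) (Set.Iic x)).toReal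

/-- The `ℓp` norm on `ℝ^d` for `p ∈ [1,∞]` (as an extended real exponent). -/
noncomputable def lpnorm {d : ℕ} (p : ℝ≥0∞) (v : Fin d → ℝ) : ℝ :=
  if p = ∞ then ⨆ i, |v i| else (∑ i, |v i| ^ p.toReal) ^ (1 / p.toReal)

/-- The `ℓp` norm on `ℝ^d` for a real exponent `p ∈ [1,∞)`. -/
noncomputable def lpR {d : ℕ} (p : ℝ) (v : Fin d → ℝ) : ℝ := (∑ i, |v i| ^ p) ^ (1/p)

lemma dotp_add' {d : ℕ} (w x v : Fin d → ℝ) : dotp w (x + v) = dotp w x + dotp w v := by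
  simp [dotp, mul_add, Finset.sum_add_distrib]

lemma dotp_smul' {d : ℕ} (w v : Fin d → ℝ) (c : ℝ) : dotp w (c • v) = c * dotp w v := by
  simp [dotp, Finset.mul_sum, mul_left_comm]

/-- Lemma 2: the defining set of `ε`-`ℓp`-adversarial examples is
`Ω(ε v_{0|p}) ∪ Ω(−ε v_{0|p})` where `(v_{0|p})_i = sgn(w_i)(|w_i|/‖w‖_q)^{q−1}`. -/
theorem lp_adversarial_defining_set {d : ℕ} (hd : 1 ≤ d)
    (p q : ℝ) (hp : 1 < p) (hpq : 1/p + 1/q = 1)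
    (w : Fin d → ℝ) (hw : w ≠ 0) (b ε : ℝ) (hε : 0 < ε)
    (v₀p : Fin d → ℝ)
    (hv₀p : v₀p = fun i => Real.sign (w i) * (|w i| / lpR q w) ^ (q - 1))
    (x : Fin d → ℝ) :
    (∃ v : Fin d → ℝ, lpR p v ≤ ε ∧
        Xor' (0 < dotp w x + b) (0 < dotp w (x + v) + b)) ↔
      (Xor' (0 < dotp w x + b) (0 < dotp w (x + ε • v₀p) + b) ∨
       Xor' (0 < dotp w x + b) (0 < dotp w (x + (-ε) • v₀p) + b)) := by
  have hcpq : Real.HolderConjugate p q := Real.holderConjugate_iff.mpr ⟨hp, by simpa [one_div] using hpq⟩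
  have hq : 1 < q := (Real.holderConjugate_iff.mp hcpq.symm).1
  have hq0 : 0 < q := by linarith
  have hp0 : 0 < p := by linarith
  have hq1 : 0 < q - 1 := by linarith
  have hqp : (q - 1) * p = q := by
    have h1 : p + q = p * q := by field_simp at hpq; linarith
    nlinarith
  set S : ℝ := ∑ i, |w i| ^ q with hS
  have hSpos : 0 < S := by
    obtain ⟨i, hi⟩ : ∃ i, w i ≠ 0 := by
      by_contra h; push_neg at h; exact hw (funext h)
    refine Finset.sum_pos' (fun j _ => Real.rpow_nonneg (abs_nonneg _) _)
      ⟨i, Finset.mem_univ i, Real.rpow_pos_of_pos (abs_pos.2 hi) q⟩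
  set N : ℝ := lpR q w with hN
  have hNpos : 0 < N := Real.rpow_pos_of_pos hSpos _
  have hNq : N ^ q = S := by
    rw [hN, lpR, ← hS, ← Real.rpow_mul hSpos.le, one_div_mul_cancel hq0.ne', Real.rpow_one]
  have hsign : ∀ i, w i * Real.sign (w i) = |w i| := by
    intro i
    rcases lt_trichotomy (w i) 0 with h | h | h
    · rw [Real.sign_of_neg h, abs_of_neg h]; ring
    · simp [h]
    · rw [Real.sign_of_pos h, abs_of_pos h]; ring
  have hdotv : dotp w v₀p = N := by
    have hterm : ∀ i, w i * v₀p i = |w i| ^ q / N ^ (q - 1) := by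
      intro i
      rw [hv₀p]
      show w i * (Real.sign (w i) * (|w i| / N) ^ (q - 1)) = _
      rw [← mul_assoc, hsign i, Real.div_rpow (abs_nonneg _) hNpos.le]
      rcases eq_or_ne (w i) 0 with h | h
      · simp [h, Real.zero_rpow hq1.ne', Real.zero_rpow hq0.ne']
      · rw [mul_div_assoc']
        congr 1
        rw [show q = 1 + (q - 1) by ring, Real.rpow_add (abs_pos.2 h)]
        norm_num
    rw [dotp]
    simp_rw [hterm]
    rw [← Finset.sum_div, ← hS, ← hNq, ← Real.rpow_sub hNpos]
    norm_num
  have habsv : ∀ i, |v₀p i| = (|w i| / N) ^ (q - 1) := by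
    intro i
    rw [hv₀p]
    show |Real.sign (w i) * (|w i| / N) ^ (q - 1)| = _
    rw [abs_mul, abs_of_nonneg (Real.rpow_nonneg (div_nonneg (abs_nonneg _) hNpos.le) _)]
    rcases lt_trichotomy (w i) 0 with h | h | h
    · rw [Real.sign_of_neg h]; norm_num
    · simp [h, Real.zero_rpow hq1.ne', zero_div]
    · rw [Real.sign_of_pos h]; norm_num
  have hnorm1 : ∑ i, |v₀p i| ^ p = 1 := by
    have : ∀ i, |v₀p i| ^ p = |w i| ^ q / N ^ q := by
      intro i
      rw [habsv i]
      rw [← Real.rpow_mul (div_nonneg (abs_nonneg _) hNpos.le), hqp,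
        Real.div_rpow (abs_nonneg _) hNpos.le]
    simp_rw [this]
    rw [← Finset.sum_div, ← hS, hNq, div_self hSpos.ne']
  have hlpsmul : ∀ c : ℝ, lpR p (c • v₀p) = |c| := by
    intro c
    rw [lpR]
    have : ∀ i, |(c • v₀p) i| ^ p = |c| ^ p * |v₀p i| ^ p := by
      intro i
      show |c * v₀p i| ^ p = _
      rw [abs_mul, Real.mul_rpow (abs_nonneg _) (abs_nonneg _)]
    simp_rw [this]
    rw [← Finset.mul_sum, hnorm1, mul_one, ← Real.rpow_mul (abs_nonneg _),
      mul_one_div_cancel hp0.ne', Real.rpow_one]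
  have hhold : ∀ v : Fin d → ℝ, lpR p v ≤ ε → |dotp w v| ≤ ε * N := by
    intro v hv
    have hbound : ∀ u : Fin d → ℝ, lpR p u ≤ ε → dotp w u ≤ ε * N := by
      intro u hu
      have h1 := Real.inner_le_Lp_mul_Lq (Finset.univ) w u hcpq.symm
      rw [dotp]
      calc ∑ i, w i * u i ≤ (∑ i, |w i| ^ q) ^ (1/q) * (∑ i, |u i| ^ p) ^ (1/p) := h1
        _ = N * lpR p u := rfl
        _ ≤ N * ε := by
            refine mul_le_mul_of_nonneg_left hu hNpos.le
        _ = ε * N := mul_comm _ _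
    have h2 : dotp w (-v) = -dotp w v := by simp [dotp]
    have h3 : lpR p (-v) = lpR p v := by simp [lpR]
    have := hbound (-v) (by rw [h3]; exact hv)
    rw [h2] at this
    exact abs_le.2 ⟨by linarith, hbound v hv⟩
  have hpert : ∀ c : ℝ, dotp w (x + c • v₀p) = dotp w x + c * N := by
    intro c; rw [dotp_add', dotp_smul', hdotv]
  constructor
  · rintro ⟨v, hv, hx1⟩
    have hs := abs_le.1 (hhold v hv)
    rw [dotp_add'] at hx1
    rw [hpert, hpert]
    rcases hx1 with ⟨h1, h2⟩ | ⟨h1, h2⟩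
    · right
      push_neg at h2
      exact Or.inl ⟨h1, by push_neg; nlinarith [hs.1, hs.2]⟩
    · left
      exact Or.inr ⟨by nlinarith [hs.1, hs.2], h2⟩
  · rintro (h | h)
    · exact ⟨ε • v₀p, by rw [hlpsmul, abs_of_pos hε], h⟩
    · refine ⟨(-ε) • v₀p, ?_, h⟩
      rw [hlpsmul, abs_neg, abs_of_pos hε]
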